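/- If a tree H admits a cyclically-interval t-coloring, then there exist vertices x′, x″ ∈ V(H) such that t ≤ |TP(x′, x″)|. -/

import Mathlib

set_option linter.unusedSectionVars false
set_option linter.unusedVariables false

open SimpleGraph

/-- `Q` is a `t`-cyclic interval. -/
def IsCyclicInterval (t : ℕ) (Q : Set ℕ) : Prop :=
  ∃ i₁ ∈ Set.Icc 1 t, ∃ i₂ ∈ Set.Icc 1 t,
    Q = Set.Icc (min i₁ i₂) (max i₁ i₂) ∨
    Q = Set.Icc 1 t \ (Set.Icc (min i₁ i₂) (max i₁ i₂) \ {i₁, i₂})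

/-- A proper edge `t`-coloring: colors in `[1,t]`, adjacent edges differ, all colors used. -/
def IsProperEdgeColoring {V : Type*} (G : SimpleGraph V) (t : ℕ) (φ : Sym2 V → ℕ) : Prop :=
  (∀ e ∈ G.edgeSet, φ e ∈ Set.Icc 1 t) ∧
  (∀ e₁ ∈ G.edgeSet, ∀ e₂ ∈ G.edgeSet, e₁ ≠ e₂ → (∃ x, x ∈ e₁ ∧ x ∈ e₂) → φ e₁ ≠ φ e₂) ∧
  (∀ c ∈ Set.Icc 1 t, ∃ e ∈ G.edgeSet, φ e = c)

/-- A cyclically-interval `t`-coloring. -/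
def IsCyclicIntervalColoring {V : Type*} (G : SimpleGraph V) (t : ℕ) (φ : Sym2 V → ℕ) : Prop :=
  IsProperEdgeColoring G t φ ∧
  ∀ x : V, (G.incidenceSet x).Nonempty → IsCyclicInterval t (φ '' G.incidenceSet x)

/-- An interval `t`-coloring. -/
def IsIntervalColoring {V : Type*} (G : SimpleGraph V) (t : ℕ) (φ : Sym2 V → ℕ) : Prop :=
  IsProperEdgeColoring G t φ ∧
  ∀ x : V, (G.incidenceSet x).Nonempty → ∃ a b, φ '' G.incidenceSet x = Set.Icc a b

/-- `TP(u,v)` along a path `p`. -/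
def pathTP {V : Type*} (G : SimpleGraph V) {u v : V} (p : G.Walk u v) : Set (Sym2 V) :=
  if p.length ≤ 1 then {e | e ∈ p.edges}
  else ⋃ x ∈ {w | w ∈ p.support ∧ w ≠ u ∧ w ≠ v}, G.incidenceSet x

/-- `M(H)`: maximum of `|TP(b_i,b_j)|` over pairs of vertices. -/
noncomputable def treeM {V : Type*} (G : SimpleGraph V) : ℕ :=
  sSup {n | ∃ (u v : V) (p : G.Walk u v), p.IsPath ∧ (pathTP G p).ncard = n}

noncomputable def Wcyc {V : Type*} (G : SimpleGraph V) : ℕ :=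
  sSup {t | ∃ φ, IsCyclicIntervalColoring G t φ}

noncomputable def wcyc {V : Type*} (G : SimpleGraph V) : ℕ :=
  sInf {t | ∃ φ, IsCyclicIntervalColoring G t φ}

noncomputable def Wint {V : Type*} (G : SimpleGraph V) : ℕ :=
  sSup {t | ∃ φ, IsIntervalColoring G t φ}

noncomputable def wint {V : Type*} (G : SimpleGraph V) : ℕ :=
  sInf {t | ∃ φ, IsIntervalColoring G t φ}

/-- Chromatic index: least `n` admitting a proper edge coloring with colors in `[1,n]`. -/
noncomputable def chromIndex {V : Type*} (G : SimpleGraph V) : ℕ :=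
  sInf {n | ∃ φ : Sym2 V → ℕ, (∀ e ∈ G.edgeSet, φ e ∈ Set.Icc 1 n) ∧
    (∀ e₁ ∈ G.edgeSet, ∀ e₂ ∈ G.edgeSet, e₁ ≠ e₂ → (∃ x, x ∈ e₁ ∧ x ∈ e₂) → φ e₁ ≠ φ e₂)}




namespace Stmt4

variable {t : ℕ}

lemma valsub [NeZero t] (i j : ℕ) (hj : j ≤ t) :
    ((i : ZMod t) - (j : ZMod t)).val = (i + (t - j)) % t := by
  have h1 : ((i : ZMod t) - (j : ZMod t)) = ((i + (t - j) : ℕ) : ZMod t) := by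
    push_cast [Nat.cast_sub hj]
    rw [ZMod.natCast_self]
    ring
  rw [h1, ZMod.val_natCast]

lemma tpos [NeZero t] : 0 < t := Nat.pos_of_ne_zero (NeZero.ne t)

/-- Master lemma: compute any `(x - y).val` from positions relative to a base `a`. -/
lemma pos_sub [NeZero t] (a x y : ZMod t) :
    (x - y).val = if (y - a).val ≤ (x - a).val then (x - a).val - (y - a).val
      else (x - a).val + t - (y - a).val := by
  have ht : 0 < t := tpos
  set i := (x - a).val with hi
  set j := (y - a).val with hj
  have hilt : i < t := ZMod.val_lt _
  have hjlt : j < t := ZMod.val_lt _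
  have hxy : x - y = (i : ZMod t) - (j : ZMod t) := by
    rw [hi, hj, ZMod.natCast_val, ZMod.natCast_val, ZMod.cast_id, ZMod.cast_id]
    ring
  rw [hxy, valsub i j hjlt.le]
  rcases le_or_gt j i with h | h
  · have h2 : i + (t - j) = (i - j) + t := by omega
    rw [if_pos h, h2, Nat.add_mod_right, Nat.mod_eq_of_lt (by omega)]
  · rw [if_neg (by omega), Nat.mod_eq_of_lt (by omega)]
    omega

lemma pos_lt [NeZero t] (a x : ZMod t) : (x - a).val < t := ZMod.val_lt _

lemma eq_base_add_pos [NeZero t] (a x : ZMod t) : x = a + ((x - a).val : ZMod t) := by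
  rw [ZMod.natCast_val, ZMod.cast_id]; ring

lemma pos_base_add [NeZero t] (a : ZMod t) {κ : ℕ} (hκ : κ < t) :
    ((a + (κ : ZMod t)) - a).val = κ := by
  have : a + (κ : ZMod t) - a = (κ : ZMod t) := by ring
  rw [this, ZMod.val_natCast, Nat.mod_eq_of_lt hκ]

def Arc [NeZero t] (a : ZMod t) (k : ℕ) : Set (ZMod t) := {x | (x - a).val ≤ k}

lemma mem_arc [NeZero t] {a x : ZMod t} {k : ℕ} : x ∈ Arc a k ↔ (x - a).val ≤ k := Iff.rfl

lemma self_mem_arc [NeZero t] (a : ZMod t) (k : ℕ) : a ∈ Arc a k := by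
  simp [Arc, ZMod.val_zero]

lemma arc_eq_univ [NeZero t] (a : ZMod t) {k : ℕ} (hk : t - 1 ≤ k) : Arc a k = Set.univ := by
  ext x
  simp only [mem_arc, Set.mem_univ, iff_true]
  have h1 := pos_lt a x
  have h2 : 0 < t := tpos
  omega

lemma arc_mono [NeZero t] (a : ZMod t) {k k' : ℕ} (h : k ≤ k') : Arc a k ⊆ Arc a k' :=
  fun _ hx => le_trans hx h

lemma arc_trunc [NeZero t] (a : ZMod t) (k : ℕ) : Arc a k = Arc a (min k (t - 1)) := by
  ext x
  have h1 := pos_lt a x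
  simp only [mem_arc]
  omega

/-- membership in an arc, in terms of positions relative to a common base. -/
lemma mem_arc_pos [NeZero t] {a u x : ZMod t} {k : ℕ} :
    x ∈ Arc u k ↔ (if (u - a).val ≤ (x - a).val then (x - a).val - (u - a).val
      else (x - a).val + t - (u - a).val) ≤ k := by
  rw [mem_arc, pos_sub a x u]

lemma val_add_le' [NeZero t] (p q : ZMod t) : (p + q).val ≤ p.val + q.val := by
  rw [ZMod.val_add]
  exact Nat.mod_le _ _

def IsArc [NeZero t] (S : Set (ZMod t)) : Prop := ∃ a k, S = Arc a k

lemma isArc_union [NeZero t] {A B : Set (ZMod t)} (hA : IsArc A) (hB : IsArc B)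
    (hAB : (A ∩ B).Nonempty) : IsArc (A ∪ B) := by
  obtain ⟨a, k0, rfl⟩ := hA
  obtain ⟨b, l0, rfl⟩ := hB
  have ht : 0 < t := tpos
  obtain ⟨z, hzA, hzB⟩ := hAB
  set k := min k0 (t - 1) with hkdef
  set l := min l0 (t - 1) with hldef
  rw [arc_trunc a k0, ← hkdef] at hzA ⊢
  rw [arc_trunc b l0, ← hldef] at hzB ⊢
  have hk : k ≤ t - 1 := min_le_right _ _
  have hl : l ≤ t - 1 := min_le_right _ _
  set β := (b - a).val with hβ
  set ζ := (z - a).val with hζ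
  have hβlt : β < t := pos_lt a b
  have hζlt : ζ < t := pos_lt a z
  rw [mem_arc, ← hζ] at hzA
  rw [mem_arc_pos (a := a), ← hζ, ← hβ] at hzB
  have hzfact : (β ≤ ζ ∧ ζ - β ≤ l) ∨ (ζ < β ∧ ζ + t - β ≤ l) := by
    rcases le_or_gt β ζ with h | h
    · rw [if_pos h] at hzB; exact Or.inl ⟨h, hzB⟩
    · rw [if_neg (by omega)] at hzB; exact Or.inr ⟨h, hzB⟩
  have habfact : (β = 0 ∧ (a - b).val = 0) ∨ (0 < β ∧ (a - b).val = t - β) := by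
    have h0 : ((a : ZMod t) - a).val = 0 := by simp [ZMod.val_zero]
    have hps := pos_sub a a b
    rw [← hβ, h0] at hps
    rcases Nat.eq_zero_or_pos β with h | h
    · rw [if_pos (by omega)] at hps; exact Or.inl ⟨h, by omega⟩
    · rw [if_neg (by omega)] at hps; exact Or.inr ⟨h, by omega⟩
  have hxfact : ∀ x : ZMod t, (β ≤ (x - a).val ∧ (x - b).val = (x - a).val - β) ∨
      ((x - a).val < β ∧ (x - b).val = (x - a).val + t - β) := by
    intro x
    have hps := pos_sub a x b
    rw [← hβ] at hps
    rcases le_or_gt β (x - a).val with h | h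
    · rw [if_pos h] at hps; exact Or.inl ⟨h, hps⟩
    · rw [if_neg (by omega)] at hps; exact Or.inr ⟨h, hps⟩
  have hkey : β ≤ k ∨ (a - b).val ≤ l := by
    by_contra hcon
    push_neg at hcon
    omega
  rcases hkey with hba | hab
  · refine ⟨a, max k (β + l), ?_⟩
    ext x
    have hx := hxfact x
    have hmlt : (x - a).val < t := pos_lt a x
    simp only [Set.mem_union, mem_arc]
    omega
  · refine ⟨b, max l ((a - b).val + k), ?_⟩
    ext x
    have hx := hxfact x
    have hmlt : (x - a).val < t := pos_lt a x
    have hblt : (x - b).val < t := pos_lt b x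
    simp only [Set.mem_union, mem_arc]
    omega

lemma arc_contig_half [NeZero t] {α : ZMod t} {K : ℕ} {u w : ZMod t}
    (hw : w ∈ Arc α K) (hK : K ≤ t - 1)
    (hij : (u - α).val ≤ (w - α).val) : Arc u ((w - u).val) ⊆ Arc α K := by
  intro x hx
  have ht : 0 < t := tpos
  set i := (u - α).val with hi
  set jj := (w - α).val with hj
  set m := (x - α).val with hm
  have hilt : i < t := pos_lt α u
  have hjlt : jj < t := pos_lt α w
  have hmlt : m < t := pos_lt α x
  have hwu : (w - u).val = jj - i := by
    have := pos_sub α w u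
    rw [← hi, ← hj, if_pos hij] at this
    exact this
  have hxu : (x - u).val = if i ≤ m then m - i else m + t - i := by
    have := pos_sub α x u
    rw [← hi, ← hm] at this
    exact this
  rw [mem_arc, hwu] at hx
  rw [mem_arc] at hw ⊢
  rw [← hj] at hw
  rw [← hm]
  rw [hxu] at hx
  rcases le_or_gt i m with h3 | h3
  · rw [if_pos h3] at hx; omega
  · rw [if_neg (by omega)] at hx; omega

lemma arc_contig [NeZero t] {C : Set (ZMod t)} (hC : IsArc C) {u w : ZMod t}
    (hu : u ∈ C) (hw : w ∈ C) :
    Arc u ((w - u).val) ⊆ C ∨ Arc w ((u - w).val) ⊆ C := by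
  obtain ⟨α, K0, rfl⟩ := hC
  rw [arc_trunc α K0] at *
  set K := min K0 (t - 1)
  have hK : K ≤ t - 1 := min_le_right _ _
  rcases le_or_gt (u - α).val (w - α).val with h | h
  · exact Or.inl (arc_contig_half hw hK h)
  · exact Or.inr (arc_contig_half hu hK h.le)

lemma neg_arc [NeZero t] (a : ZMod t) (k : ℕ) :
    (fun x : ZMod t => -x) '' Arc a k = Arc (-a - (k : ZMod t)) k := by
  have ht : 0 < t := tpos
  have key : ∀ y : ZMod t, (-y - (-a - (k : ZMod t))).val ≤ k ↔ (y - a).val ≤ k := by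
    intro y
    set wv := (y - a).val with hw
    have hwvlt : wv < t := pos_lt a y
    have h1 : -y - (-a - (k : ZMod t)) = (k : ZMod t) - (wv : ℕ) := by
      rw [hw, ZMod.natCast_val, ZMod.cast_id]; ring
    rcases le_or_gt t k with hk | hk
    · have h2 := ZMod.val_lt (-y - (-a - (k : ZMod t)))
      constructor <;> intro _ <;> omega
    · rw [h1, valsub k wv (by omega)]
      rcases le_or_gt wv k with h | h
      · have h3 : k + (t - wv) = (k - wv) + t := by omega
        rw [h3, Nat.add_mod_right, Nat.mod_eq_of_lt (by omega)]
        omega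
      · rw [Nat.mod_eq_of_lt (by omega)]
        omega
  ext x
  simp only [Set.mem_image, mem_arc]
  constructor
  · rintro ⟨y, hy, rfl⟩
    exact (key y).mpr hy
  · intro hx
    refine ⟨-x, ?_, by simp⟩
    have h2 := (key (-x)).mp
    simp only [neg_neg] at h2
    exact h2 hx


end Stmt4

open SimpleGraph

namespace Stmt4

section Graph

variable {t : ℕ} [NeZero t] {V : Type*} [Fintype V] [DecidableEq V] {H : SimpleGraph V}

/-- spectrum of a vertex under coloring ψ -/
def spect (H : SimpleGraph V) (ψ : Sym2 V → ZMod t) (z : V) : Set (ZMod t) :=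
  ψ '' H.incidenceSet z

/-- vertices reachable from `p` by a walk avoiding the edge `s(x,p)`. -/
def RchB (H : SimpleGraph V) (x p : V) : Set V := {v | ∃ w : H.Walk p v, s(x, p) ∉ w.edges}

/-- union of spectra over the branch. -/
def WSB (H : SimpleGraph V) (ψ : Sym2 V → ZMod t) (x p : V) : Set (ZMod t) :=
  ⋃ v ∈ RchB H x p, spect H ψ v

/-- colors of spectra along a walk -/
def covw (ψ : Sym2 V → ZMod t) {u v : V} (w : H.Walk u v) : Set (ZMod t) :=
  ⋃ z ∈ {z | z ∈ w.support}, spect H ψ z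

lemma spect_subset_covw (ψ : Sym2 V → ZMod t) {u v z : V} (w : H.Walk u v)
    (hz : z ∈ w.support) : spect H ψ z ⊆ covw ψ w := by
  intro χ hχ
  exact Set.mem_biUnion hz hχ

lemma mem_covw {ψ : Sym2 V → ZMod t} {u v : V} {w : H.Walk u v} {χ : ZMod t} :
    χ ∈ covw ψ w ↔ ∃ z ∈ w.support, χ ∈ spect H ψ z := by
  simp [covw]

lemma self_mem_RchB (x p : V) : p ∈ RchB H x p := ⟨Walk.nil, by simp⟩

lemma edge_color_mem_spect {ψ : Sym2 V → ZMod t} {x p : V} (hadj : H.Adj x p) :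
    ψ s(x, p) ∈ spect H ψ p := by
  refine ⟨s(x, p), ?_, rfl⟩
  rw [Sym2.eq_swap]
  exact (H.mk'_mem_incidenceSet_left_iff).2 hadj.symm

lemma edge_color_mem_spect' {ψ : Sym2 V → ZMod t} {x p : V} (hadj : H.Adj x p) :
    ψ s(x, p) ∈ spect H ψ x :=
  ⟨s(x, p), (H.mk'_mem_incidenceSet_left_iff).2 hadj, rfl⟩

lemma spect_subset_WSB (ψ : Sym2 V → ZMod t) {x p v : V} (hv : v ∈ RchB H x p) :
    spect H ψ v ⊆ WSB H ψ x p := fun χ hχ => Set.mem_biUnion hv hχ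

/-- in an acyclic graph, one cannot reach `x` from `p` while avoiding the edge `s(x,p)`. -/
lemma not_mem_RchB (hac : H.IsAcyclic) {x p : V} (hadj : H.Adj x p) : x ∉ RchB H x p := by
  rintro ⟨w, hw⟩
  have hbp : w.bypass.IsPath := Walk.bypass_isPath w
  have hbe : s(x, p) ∉ w.bypass.edges := fun hc => hw (Walk.edges_bypass_subset w hc)
  have huniq := (isAcyclic_iff_path_unique.mp hac)
    (p := ⟨w.bypass, hbp⟩) (q := ⟨Walk.cons hadj.symm Walk.nil, by simp [hadj.ne']⟩)
  apply hbe
  have : w.bypass = Walk.cons hadj.symm Walk.nil := congrArg Subtype.val huniq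
  rw [this]
  simp [Sym2.eq_swap]

/-- a neighbor `z ≠ q` of `p` is not in the branch of `q`. -/
lemma neighbor_not_mem_RchB (hac : H.IsAcyclic) {p q z : V} (hadj : H.Adj p q)
    (hz : H.Adj p z) (hne : z ≠ q) : z ∉ RchB H p q := by
  rintro ⟨w, hw⟩
  refine not_mem_RchB hac hadj ⟨w.append (Walk.cons hz.symm Walk.nil), ?_⟩
  rw [Walk.edges_append]
  intro hc
  rcases List.mem_append.mp hc with hc | hc
  · exact hw hc
  · simp only [Walk.edges_cons, Walk.edges_nil, List.mem_singleton] at hc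
    rcases Sym2.eq_iff.mp hc with ⟨h3, h4⟩ | ⟨h3, h4⟩
    · exact hadj.ne' h4
    · exact hne h4.symm

lemma support_subset_RchB {x p v : V} {w : H.Walk p v} (hw : s(x, p) ∉ w.edges) :
    ∀ z ∈ w.support, z ∈ RchB H x p := by
  intro z hz
  exact ⟨w.takeUntil z hz, fun hc => hw (Walk.edges_takeUntil_subset w hz hc)⟩

lemma covw_subset_WSB (ψ : Sym2 V → ZMod t) {x p v : V} {w : H.Walk p v}
    (hw : s(x, p) ∉ w.edges) : covw ψ w ⊆ WSB H ψ x p := by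
  intro χ hχ
  obtain ⟨z, hz, hχ⟩ := mem_covw.mp hχ
  exact Set.mem_biUnion (support_subset_RchB hw z hz) hχ

/-- branches are nested. -/
lemma RchB_subset (hac : H.IsAcyclic) {x p q : V} (hadjxp : H.Adj x p) (hadjpq : H.Adj p q)
    (hne : q ≠ x) : RchB H p q ⊆ RchB H x p := by
  rintro v ⟨w, hw⟩
  have hxs : x ∉ w.support := by
    intro hxs
    exact neighbor_not_mem_RchB hac hadjpq hadjxp.symm (Ne.symm hne) (support_subset_RchB hw x hxs)
  have hxe : s(x, p) ∉ w.edges := by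
    intro hc
    exact hxs (Walk.fst_mem_support_of_mem_edges w hc)
  refine ⟨Walk.cons hadjpq w, ?_⟩
  rw [Walk.edges_cons]
  intro hc
  rcases List.mem_cons.mp hc with hc | hc
  · rcases Sym2.eq_iff.mp hc with ⟨h3, h4⟩ | ⟨h3, h4⟩
    · exact hadjxp.ne h3
    · exact hne h3.symm
  · exact hxe hc

lemma RchB_ssubset (hac : H.IsAcyclic) {x p q : V} (hadjxp : H.Adj x p) (hadjpq : H.Adj p q)
    (hne : q ≠ x) : RchB H p q ⊂ RchB H x p := by
  refine ⟨RchB_subset hac hadjxp hadjpq hne, fun hsup => ?_⟩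
  exact not_mem_RchB hac hadjpq (hsup (self_mem_RchB x p))

/-- decomposition of a branch vertex into a sub-branch. -/
lemma RchB_decomp (hac : H.IsAcyclic) {x p v : V} (hv : v ∈ RchB H x p) (hvp : v ≠ p) :
    ∃ q, H.Adj p q ∧ q ≠ x ∧ v ∈ RchB H p q := by
  obtain ⟨w0, hw0⟩ := hv
  have hbp : w0.bypass.IsPath := Walk.bypass_isPath w0
  have hbe : s(x, p) ∉ w0.bypass.edges := fun hc => hw0 (Walk.edges_bypass_subset w0 hc)
  set w := w0.bypass with hwdef
  clear_value w
  cases w with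
  | nil => exact absurd rfl hvp.symm -- v = p
  | cons hadj wtl =>
    rename_i q
    have hpath := (Walk.cons_isPath_iff _ _).mp hbp
    have hps : p ∉ wtl.support := hpath.2
    have hq : q ≠ x := by
      rintro rfl
      apply hbe
      rw [Walk.edges_cons, Sym2.eq_swap]
      exact List.mem_cons_self
    refine ⟨q, hadj, hq, ⟨wtl, ?_⟩⟩
    intro hc
    exact hps (Walk.fst_mem_support_of_mem_edges wtl hc)

lemma RchB_disjoint (hac : H.IsAcyclic) {p q q' : V} (h1 : H.Adj p q) (h2 : H.Adj p q')
    (hne : q ≠ q') {v : V} (hv1 : v ∈ RchB H p q) (hv2 : v ∈ RchB H p q') : False := by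
  obtain ⟨w1, hw1⟩ := hv1
  obtain ⟨w2, hw2⟩ := hv2
  have hp2 : p ∉ w2.support := by
    intro hc
    exact not_mem_RchB hac h2 (support_subset_RchB hw2 p hc)
  have he2 : s(p, q) ∉ w2.edges := by
    intro hc
    exact hp2 (Walk.fst_mem_support_of_mem_edges w2 hc)
  -- walk q → v → q' avoiding s(p,q), then q' → p
  refine not_mem_RchB hac h1 ⟨(w1.append w2.reverse).append (Walk.cons h2.symm Walk.nil), ?_⟩
  rw [Walk.edges_append, Walk.edges_append, Walk.edges_reverse]
  intro hc
  rcases List.mem_append.mp hc with hc | hc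
  · rcases List.mem_append.mp hc with hc | hc
    · exact hw1 hc
    · exact he2 (List.mem_reverse.mp hc)
  · simp only [Walk.edges_cons, Walk.edges_nil, List.mem_singleton] at hc
    rcases Sym2.eq_iff.mp hc with ⟨h4, h5⟩ | ⟨h4, h5⟩
    · exact h2.ne h4
    · exact hne h5
end Graph

section Connect

variable {t : ℕ} [NeZero t] {V : Type*} [Fintype V] [DecidableEq V] {H : SimpleGraph V}

lemma covw_nil (ψ : Sym2 V → ZMod t) (u : V) :
    covw ψ (Walk.nil : H.Walk u u) = spect H ψ u := by
  simp [covw]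

lemma covw_cons (ψ : Sym2 V → ZMod t) {u u' v : V} (h : H.Adj u u') (w : H.Walk u' v) :
    covw ψ (Walk.cons h w) = spect H ψ u ∪ covw ψ w := by
  ext χ
  constructor
  · intro hχ
    obtain ⟨z, hz, h2⟩ := mem_covw.mp hχ
    rw [Walk.support_cons, List.mem_cons] at hz
    rcases hz with rfl | hz
    · exact Or.inl h2
    · exact Or.inr (mem_covw.mpr ⟨z, hz, h2⟩)
  · rintro (h | h)
    · exact mem_covw.mpr ⟨u, by simp [Walk.support_cons], h⟩
    · obtain ⟨z, hz, h2⟩ := mem_covw.mp h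
      exact mem_covw.mpr ⟨z, by simp [Walk.support_cons, hz], h2⟩

lemma covw_isArc (ψ : Sym2 V → ZMod t)
    (harc : ∀ z : V, (H.incidenceSet z).Nonempty → IsArc (spect H ψ z))
    {u v : V} (w : H.Walk u v) (hu : (H.incidenceSet u).Nonempty) : IsArc (covw ψ w) := by
  induction w with
  | nil => rw [covw_nil]; exact harc _ hu
  | @cons u u' v h w ih =>
    rw [covw_cons]
    have hu' : (H.incidenceSet u').Nonempty :=
      ⟨s(u, u'), by rw [Sym2.eq_swap]; exact (H.mk'_mem_incidenceSet_left_iff).2 h.symm⟩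
    refine isArc_union (harc _ ⟨s(u, u'), (H.mk'_mem_incidenceSet_left_iff).2 h⟩) (ih hu') ?_
    refine ⟨ψ s(u, u'), edge_color_mem_spect' h, ?_⟩
    exact spect_subset_covw ψ w w.start_mem_support (edge_color_mem_spect h)

lemma branch_contig (ψ : Sym2 V → ZMod t)
    (harc : ∀ z : V, (H.incidenceSet z).Nonempty → IsArc (spect H ψ z))
    {p q v : V} (hadj : H.Adj p q) (hv : v ∈ RchB H p q) {ξ : ZMod t}
    (hξ : ξ ∈ spect H ψ v) :
    Arc (ψ s(p, q)) ((ξ - ψ s(p, q)).val) ⊆ WSB H ψ p q ∨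
    Arc ξ ((ψ s(p, q) - ξ).val) ⊆ WSB H ψ p q := by
  obtain ⟨w, hw⟩ := hv
  have hqinc : (H.incidenceSet q).Nonempty :=
    ⟨s(p, q), by rw [Sym2.eq_swap]; exact (H.mk'_mem_incidenceSet_left_iff).2 hadj.symm⟩
  have harcC : IsArc (covw ψ w) := covw_isArc ψ harc w hqinc
  have h1 : ψ s(p, q) ∈ covw ψ w :=
    spect_subset_covw ψ w w.start_mem_support (edge_color_mem_spect hadj)
  have h2 : ξ ∈ covw ψ w := spect_subset_covw ψ w w.end_mem_support hξ
  have h3 := covw_subset_WSB ψ hw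
  rcases arc_contig harcC h1 h2 with h | h
  · exact Or.inl (h.trans h3)
  · exact Or.inr (h.trans h3)

end Connect

section Cover

variable {t : ℕ} [NeZero t]

lemma arc_sub_arc {a c : ZMod t} {k D : ℕ} (h : (c - a).val + D ≤ k) : Arc c D ⊆ Arc a k := by
  intro x hx
  rw [mem_arc] at hx ⊢
  have h2 : x - a = (x - c) + (c - a) := by ring
  rw [h2]
  have := val_add_le' (x - c) (c - a)
  omega

lemma cover3 (a : ZMod t) {k i₀ π π' : ℕ} (hπ : π ≤ k) (hπ' : π' ≤ k)
    (hκ : k + 1 + i₀ ≤ t - 1) :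
    Set.univ ⊆ Arc a k ∪ Arc (a + ((π : ℕ) : ZMod t)) (k + i₀ - π) ∪
      Arc (a + ((k + 1 + i₀ : ℕ) : ZMod t)) (π' + t - (k + 1 + i₀)) := by
  intro ξ _
  have ht : 0 < t := tpos
  set κ := (ξ - a).val with hκd
  have hκlt : κ < t := pos_lt a ξ
  have hπb : ((a + ((π : ℕ) : ZMod t)) - a).val = π := pos_base_add a (by omega)
  have hκ₀b : ((a + ((k + 1 + i₀ : ℕ) : ZMod t)) - a).val = k + 1 + i₀ := pos_base_add a (by omega)
  have h1 := pos_sub a ξ (a + ((π : ℕ) : ZMod t))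
  rw [hπb, ← hκd] at h1
  have h2 := pos_sub a ξ (a + ((k + 1 + i₀ : ℕ) : ZMod t))
  rw [hκ₀b, ← hκd] at h2
  rcases le_or_gt κ k with h3 | h3
  · exact Or.inl (Or.inl h3)
  · rcases le_or_gt κ (k + i₀) with h4 | h4
    · refine Or.inl (Or.inr ?_)
      rw [mem_arc, h1, if_pos (by omega)]
      omega
    · refine Or.inr ?_
      rw [mem_arc, h2, if_pos (by omega)]
      omega

lemma coverW (a : ZMod t) {k i₀ π : ℕ} (hπ : π ≤ k) (hκ : k + 1 + i₀ ≤ t - 1) :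
    Set.univ ⊆ Arc (a + ((π : ℕ) : ZMod t)) (k + i₀ - π) ∪
      Arc (a + ((k + 1 + i₀ : ℕ) : ZMod t)) (π + t - (k + 1 + i₀)) := by
  intro ξ _
  have ht : 0 < t := tpos
  set κ := (ξ - a).val with hκd
  have hκlt : κ < t := pos_lt a ξ
  have hπb : ((a + ((π : ℕ) : ZMod t)) - a).val = π := pos_base_add a (by omega)
  have hκ₀b : ((a + ((k + 1 + i₀ : ℕ) : ZMod t)) - a).val = k + 1 + i₀ := pos_base_add a (by omega)
  have h1 := pos_sub a ξ (a + ((π : ℕ) : ZMod t))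
  rw [hπb, ← hκd] at h1
  have h2 := pos_sub a ξ (a + ((k + 1 + i₀ : ℕ) : ZMod t))
  rw [hκ₀b, ← hκd] at h2
  rcases le_or_gt π κ with h3 | h3
  · rcases le_or_gt κ (k + i₀) with h4 | h4
    · refine Or.inl ?_
      rw [mem_arc, h1, if_pos h3]
      omega
    · refine Or.inr ?_
      rw [mem_arc, h2]
      rcases le_or_gt (k + 1 + i₀) κ with h5 | h5
      · rw [if_pos h5]; omega
      · rw [if_neg (by omega)]; omega
  · refine Or.inr ?_
    rw [mem_arc, h2, if_neg (by omega)]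
    omega

lemma sub2 (a : ZMod t) {k j π D : ℕ} (hj : j ≤ k) (hπ : π ≤ k) (hk : k ≤ t - 1) :
    Arc (a + ((j : ℕ) : ZMod t)) D ⊆ Arc a k ∪
      Arc (a + ((π : ℕ) : ZMod t)) (min (j + D) (t - 1) - π) := by
  intro ξ hξ
  have ht : 0 < t := tpos
  set κ := (ξ - a).val with hκd
  have hκlt : κ < t := pos_lt a ξ
  have hjb : ((a + ((j : ℕ) : ZMod t)) - a).val = j := pos_base_add a (by omega)
  have hπb : ((a + ((π : ℕ) : ZMod t)) - a).val = π := pos_base_add a (by omega)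
  have h1 := pos_sub a ξ (a + ((j : ℕ) : ZMod t))
  rw [hjb, ← hκd] at h1
  have h2 := pos_sub a ξ (a + ((π : ℕ) : ZMod t))
  rw [hπb, ← hκd] at h2
  rw [mem_arc, h1] at hξ
  rcases le_or_gt j κ with h3 | h3
  · rw [if_pos h3] at hξ
    rcases le_or_gt κ k with h4 | h4
    · exact Or.inl h4
    · refine Or.inr ?_
      rw [mem_arc, h2, if_pos (by omega)]
      omega
  · rw [if_neg (by omega)] at hξ
    exact Or.inl (by rw [mem_arc, ← hκd]; omega)

end Cover



section Reach

variable {t : ℕ} [NeZero t] {V : Type*} [Fintype V] [DecidableEq V] {H : SimpleGraph V}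

def Jack (H : SimpleGraph V) (ψ : Sym2 V → ZMod t) : Prop :=
  ∃ (u v : V) (w : H.Walk u v), w.IsPath ∧ Set.univ ⊆ covw ψ w

/-- conclusion of the reach lemma: a path from `x` into the branch of `p` covering `Arc b D`,
or a path covering everything. -/
def ReachConc (H : SimpleGraph V) (ψ : Sym2 V → ZMod t) (x p : V) (b : ZMod t) (D : ℕ) : Prop :=
  (∃ (v : V) (w : H.Walk x v), w.IsPath ∧
    (∀ z ∈ w.support, z = x ∨ z ∈ RchB H x p) ∧ Arc b D ⊆ covw ψ w) ∨ Jack H ψ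

def ReachStmt (H : SimpleGraph V) (n : ℕ) : Prop :=
  ∀ (ψ : Sym2 V → ZMod t),
    (∀ z : V, (H.incidenceSet z).Nonempty → IsArc (spect H ψ z)) →
    ∀ (x p : V), H.Adj x p → ∀ D : ℕ,
    Arc (ψ s(x, p)) D ⊆ WSB H ψ x p →
    (RchB H x p).ncard ≤ n →
    ReachConc H ψ x p (ψ s(x, p)) D

lemma covw_neg (ψ : Sym2 V → ZMod t) {u v : V} (w : H.Walk u v) :
    covw (fun e => -ψ e) w = (fun χ : ZMod t => -χ) '' covw ψ w := by
  ext χ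
  simp only [Set.mem_image, mem_covw]
  constructor
  · rintro ⟨z, hz, e, he, rfl⟩
    exact ⟨ψ e, ⟨z, hz, e, he, rfl⟩, rfl⟩
  · rintro ⟨σ, ⟨z, hz, e, he, rfl⟩, rfl⟩
    exact ⟨z, hz, e, he, rfl⟩

lemma spect_neg (ψ : Sym2 V → ZMod t) (z : V) :
    spect H (fun e => -ψ e) z = (fun χ : ZMod t => -χ) '' spect H ψ z := by
  unfold spect
  rw [← Set.image_comp]
  rfl

lemma WSB_neg (ψ : Sym2 V → ZMod t) (x p : V) :
    WSB H (fun e => -ψ e) x p = (fun χ : ZMod t => -χ) '' WSB H ψ x p := by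
  unfold WSB
  rw [Set.image_iUnion]
  refine Set.iUnion_congr fun v => ?_
  rw [Set.image_iUnion]
  refine Set.iUnion_congr fun hv => ?_
  exact spect_neg ψ v

lemma univ_subset_of_neg_image {S : Set (ZMod t)} (h : Set.univ ⊆ (fun χ : ZMod t => -χ) '' S) :
    Set.univ ⊆ S := by
  intro χ _
  obtain ⟨σ, hσ, hs⟩ := h (Set.mem_univ (-χ))
  have : σ = χ := by
    have := congrArg Neg.neg hs
    simpa using this
  exact this ▸ hσ

/-- the "minus direction" version, derived from `ReachStmt` via color negation. -/
lemma reachm_of (n : ℕ) (R : ReachStmt (t := t) H n) :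
    ∀ (ψ : Sym2 V → ZMod t),
    (∀ z : V, (H.incidenceSet z).Nonempty → IsArc (spect H ψ z)) →
    ∀ (x p : V), H.Adj x p → ∀ (b : ZMod t) (D : ℕ),
    ψ s(x, p) = b + (D : ZMod t) →
    Arc b D ⊆ WSB H ψ x p →
    (RchB H x p).ncard ≤ n →
    ReachConc H ψ x p b D := by
  intro ψ harc x p hadj b D hanchor hsub hn
  set ψ' : Sym2 V → ZMod t := fun e => -ψ e with hψ'
  have harc' : ∀ z : V, (H.incidenceSet z).Nonempty → IsArc (spect H ψ' z) := by
    intro z hz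
    obtain ⟨α, κ, hκ⟩ := harc z hz
    rw [spect_neg, hκ, neg_arc]
    exact ⟨_, _, rfl⟩
  have hedge : ψ' s(x, p) = -b - (D : ZMod t) := by
    rw [hψ']
    simp only
    rw [hanchor]
    ring
  have harcneg : Arc (ψ' s(x, p)) D = (fun χ : ZMod t => -χ) '' Arc b D := by
    rw [hedge, neg_arc]
  have hsub' : Arc (ψ' s(x, p)) D ⊆ WSB H ψ' x p := by
    rw [harcneg, WSB_neg]
    exact Set.image_mono hsub
  rcases R ψ' harc' x p hadj D hsub' hn with ⟨v, w, hpath, hsupp, hcov⟩ | hjack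
  · left
    refine ⟨v, w, hpath, hsupp, ?_⟩
    rw [covw_neg, harcneg] at hcov
    exact (Set.image_subset_image_iff neg_injective).mp hcov
  · right
    obtain ⟨u, v, w, hpath, hcov⟩ := hjack
    rw [covw_neg] at hcov
    exact ⟨u, v, w, hpath, univ_subset_of_neg_image hcov⟩

end Reach


section ReachMain

variable {t : ℕ} [NeZero t] {V : Type*} [Fintype V] [DecidableEq V] {H : SimpleGraph V}

lemma covw_append (ψ : Sym2 V → ZMod t) {u v z : V} (w1 : H.Walk u v) (w2 : H.Walk v z) :
    covw ψ (w1.append w2) = covw ψ w1 ∪ covw ψ w2 := by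
  ext χ
  simp only [mem_covw, Set.mem_union]
  constructor
  · rintro ⟨y, hy, h⟩
    rcases (Walk.mem_support_append_iff _ _).mp hy with hy | hy
    · exact Or.inl ⟨y, hy, h⟩
    · exact Or.inr ⟨y, hy, h⟩
  · rintro (⟨y, hy, h⟩ | ⟨y, hy, h⟩)
    · exact ⟨y, (Walk.mem_support_append_iff _ _).mpr (Or.inl hy), h⟩
    · exact ⟨y, (Walk.mem_support_append_iff _ _).mpr (Or.inr hy), h⟩

lemma covw_reverse (ψ : Sym2 V → ZMod t) {u v : V} (w : H.Walk u v) :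
    covw ψ w.reverse = covw ψ w := by
  ext χ
  simp only [mem_covw, Walk.support_reverse, List.mem_reverse]

theorem reach_main (hac : H.IsAcyclic) : ∀ n : ℕ, ReachStmt (t := t) H n := by
  intro n
  induction n with
  | zero =>
    intro ψ harc x p hadj D hsub hn
    exfalso
    have h1 : 0 < (RchB H x p).ncard := by
      rw [Set.ncard_pos (Set.toFinite _)]
      exact ⟨p, self_mem_RchB x p⟩
    omega
  | succ n ih =>
    intro ψ harc x p hadj D hsub hn
    have ht : 0 < t := tpos
    have hpinc : (H.incidenceSet p).Nonempty :=
      ⟨s(x, p), by rw [Sym2.eq_swap]; exact (H.mk'_mem_incidenceSet_left_iff).2 hadj.symm⟩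
    obtain ⟨a, k0, hspect0⟩ := harc p hpinc
    rw [arc_trunc] at hspect0
    set k := min k0 (t - 1) with hkdef
    have hk : k ≤ t - 1 := min_le_right _ _
    set c := ψ s(x, p) with hcdef
    have hcmem : c ∈ spect H ψ p := edge_color_mem_spect hadj
    rw [hspect0, mem_arc] at hcmem
    set j := (c - a).val with hjdef
    have hjk : j ≤ k := hcmem
    have hjlt : j < t := pos_lt a c
    have hcform : c = a + ((j : ℕ) : ZMod t) := by
      rw [hjdef]; exact eq_base_add_pos a c
    by_cases hcase1 : Arc c D ⊆ Arc a k
    · left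
      have hsubs : Arc c D ⊆ spect H ψ p := by rw [hspect0]; exact hcase1
      refine ⟨p, Walk.cons hadj Walk.nil, ?_, ?_, ?_⟩
      · rw [Walk.cons_isPath_iff]
        exact ⟨Walk.IsPath.nil, by simp [hadj.ne]⟩
      · intro z hz
        rw [Walk.support_cons] at hz
        rcases List.mem_cons.mp hz with rfl | hz
        · exact Or.inl rfl
        · simp only [Walk.support_nil, List.mem_singleton] at hz
          exact Or.inr (by rw [hz]; exact self_mem_RchB x p)
      · rw [covw_cons, covw_nil]
        exact fun ξ hξ => Or.inr (hsubs hξ)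
    · -- main case
      have hjD : k < j + D := by
        by_contra h
        push_neg at h
        exact hcase1 (arc_sub_arc (by omega))
      have hklt : k < t - 1 := by
        by_contra h
        push_neg at h
        exact hcase1 (by rw [arc_eq_univ a h]; exact Set.subset_univ _)
      set L := min (j + D) (t - 1) with hLdef
      have hL1 : k + 1 ≤ L := by omega
      have hL2 : L ≤ t - 1 := min_le_right _ _
      have hstretch : ∀ κ : ℕ, k + 1 ≤ κ → κ ≤ L →
          (a + (κ : ZMod t)) ∈ WSB H ψ x p ∧ (a + (κ : ZMod t)) ∉ spect H ψ p := by
        intro κ h1 h2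
        have hκlt : κ < t := by omega
        have hbase : ((a + (κ : ZMod t)) - a).val = κ := pos_base_add a hκlt
        constructor
        · apply hsub
          rw [mem_arc]
          have hps := pos_sub a (a + (κ : ZMod t)) c
          rw [hbase, ← hjdef] at hps
          rw [hps, if_pos (by omega)]
          omega
        · rw [hspect0, mem_arc, hbase]
          omega
      have hAB : ∀ κ : ℕ, k + 1 ≤ κ → κ ≤ L →
          (∃ q, H.Adj p q ∧ q ≠ x ∧
            Arc (ψ s(p, q)) (((a + (κ : ZMod t)) - ψ s(p, q)).val) ⊆ WSB H ψ p q) ∨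
          (∃ q, H.Adj p q ∧ q ≠ x ∧
            Arc (a + (κ : ZMod t)) ((ψ s(p, q) - (a + (κ : ZMod t))).val) ⊆ WSB H ψ p q) := by
        intro κ h1 h2
        obtain ⟨hmem, hnot⟩ := hstretch κ h1 h2
        have hmem' : ∃ v, v ∈ RchB H x p ∧ (a + (κ : ZMod t)) ∈ spect H ψ v := by
          simpa [WSB] using hmem
        obtain ⟨v, hv, hξv⟩ := hmem'
        have hvp : v ≠ p := fun h => hnot (h ▸ hξv)
        obtain ⟨q, hq, hqx, hvq⟩ := RchB_decomp hac hv hvp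
        rcases branch_contig ψ harc hq hvq hξv with h | h
        · exact Or.inl ⟨q, hq, hqx, h⟩
        · exact Or.inr ⟨q, hq, hqx, h⟩
      classical
      by_cases hB : ∃ i : ℕ, i ≤ L - (k + 1) ∧ ∃ q, H.Adj p q ∧ q ≠ x ∧
          Arc (a + ((k + 1 + i : ℕ) : ZMod t))
            ((ψ s(p, q) - (a + ((k + 1 + i : ℕ) : ZMod t))).val) ⊆ WSB H ψ p q
      · -- a B-point exists
        have hspec := Nat.find_spec hB
        set i₀ := Nat.find hB with hi₀def
        obtain ⟨hi₀le, q', hq', hq'x, hBq'⟩ := hspec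
        have hκ₀L : k + 1 + i₀ ≤ L := by omega
        have hκ₀lt : k + 1 + i₀ ≤ t - 1 := by omega
        have hφ'mem : ψ s(p, q') ∈ spect H ψ p := edge_color_mem_spect' hq'
        rw [hspect0, mem_arc] at hφ'mem
        set π' := (ψ s(p, q') - a).val with hπ'def
        have hπ'k : π' ≤ k := hφ'mem
        have hbase₀ : ((a + ((k + 1 + i₀ : ℕ) : ZMod t)) - a).val = k + 1 + i₀ :=
          pos_base_add a (by omega)
        have hrad : (ψ s(p, q') - (a + ((k + 1 + i₀ : ℕ) : ZMod t))).val
            = π' + t - (k + 1 + i₀) := by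
          have hps := pos_sub a (ψ s(p, q')) (a + ((k + 1 + i₀ : ℕ) : ZMod t))
          rw [hbase₀, ← hπ'def] at hps
          rw [hps, if_neg (by omega)]
        have hanchor : ψ s(p, q') = (a + ((k + 1 + i₀ : ℕ) : ZMod t))
            + ((π' + t - (k + 1 + i₀) : ℕ) : ZMod t) := by
          have h5 := eq_base_add_pos (a + ((k + 1 + i₀ : ℕ) : ZMod t)) (ψ s(p, q'))
          rw [hrad] at h5
          exact h5
        have hcard' : (RchB H p q').ncard ≤ n := by
          have h6 := Set.ncard_lt_ncard (RchB_ssubset hac hadj hq' hq'x) (Set.toFinite _)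
          omega
        rw [hrad] at hBq'
        rcases reachm_of n ih ψ harc p q' hq' _ _ hanchor hBq' hcard' with
          ⟨v₂, q2, hq2path, hq2supp, hq2cov⟩ | hjack
        swap
        · exact Or.inr hjack
        have hsp2 : spect H ψ p ⊆ covw ψ q2 :=
          spect_subset_covw ψ q2 q2.start_mem_support
        rcases Nat.eq_zero_or_pos i₀ with hi0 | hi0
        · -- i₀ = 0 : jackpot via cons x q2
          right
          refine ⟨x, v₂, Walk.cons hadj q2, ?_, ?_⟩
          · rw [Walk.cons_isPath_iff]
            refine ⟨hq2path, fun hxs => ?_⟩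
            rcases hq2supp x hxs with h7 | h7
            · exact hadj.ne h7
            · exact neighbor_not_mem_RchB hac hq' hadj.symm (Ne.symm hq'x) h7
          · intro ξ _
            have h8 := cover3 (t := t) a (k := k) (i₀ := 0) (π := π') (π' := π')
              hπ'k hπ'k (by omega)
            have h9 := h8 (Set.mem_univ ξ)
            rw [covw_cons]
            rw [hi0] at hq2cov
            rcases h9 with (h9 | h9) | h9
            · exact Or.inr (hsp2 (by rw [hspect0]; exact h9))
            · refine Or.inr (hsp2 ?_)
              rw [hspect0]
              refine arc_sub_arc ?_ h9
              rw [pos_base_add a (by omega)]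
              omega
            · exact Or.inr (hq2cov h9)
        · -- i₀ > 0
          have hmin := Nat.find_min hB (show i₀ - 1 < i₀ by omega)
          have hA : ∃ q, H.Adj p q ∧ q ≠ x ∧
              Arc (ψ s(p, q)) (((a + ((k + i₀ : ℕ) : ZMod t)) - ψ s(p, q)).val)
                ⊆ WSB H ψ p q := by
            rcases hAB (k + i₀) (by omega) (by omega) with h10 | h10
            · exact h10
            · exfalso
              apply hmin
              refine ⟨by omega, ?_⟩
              have e1 : k + 1 + (i₀ - 1) = k + i₀ := by omega
              rw [e1]
              exact h10
          obtain ⟨q, hq, hqx, hAq⟩ := hA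
          have hφqmem : ψ s(p, q) ∈ spect H ψ p := edge_color_mem_spect' hq
          rw [hspect0, mem_arc] at hφqmem
          set πq := (ψ s(p, q) - a).val with hπqdef
          have hπqk : πq ≤ k := hφqmem
          have hbaseA : ((a + ((k + i₀ : ℕ) : ZMod t)) - a).val = k + i₀ :=
            pos_base_add a (by omega)
          have hradA : ((a + ((k + i₀ : ℕ) : ZMod t)) - ψ s(p, q)).val = k + i₀ - πq := by
            have hps := pos_sub a (a + ((k + i₀ : ℕ) : ZMod t)) (ψ s(p, q))
            rw [hbaseA, ← hπqdef] at hps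
            rw [hps, if_pos (by omega)]
          rw [hradA] at hAq
          have hφqform : ψ s(p, q) = a + ((πq : ℕ) : ZMod t) := by
            rw [hπqdef]; exact eq_base_add_pos a (ψ s(p, q))
          have hcardq : (RchB H p q).ncard ≤ n := by
            have h6 := Set.ncard_lt_ncard (RchB_ssubset hac hadj hq hqx) (Set.toFinite _)
            omega
          by_cases hqq : q = q'
          · -- same branch: whole circle inside WSB p q
            have hpp : π' = πq := by rw [hπ'def, hπqdef, hqq]
            rw [← hqq] at hBq'
            rw [hpp] at hBq'
            have huniv : Arc (ψ s(p, q)) (t - 1) ⊆ WSB H ψ p q := by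
              rw [arc_eq_univ (ψ s(p, q)) (le_refl _)]
              intro ξ _
              rcases coverW (t := t) a (k := k) (i₀ := i₀) (π := πq) hπqk (by omega)
                (Set.mem_univ ξ) with h11 | h11
              · exact hAq (by rw [hφqform]; exact h11)
              · exact hBq' h11
            rcases ih ψ harc p q hq (t - 1) huniv hcardq with ⟨v₁, q1, h1, h2, h3⟩ | hjack
            · right
              refine ⟨p, v₁, q1, h1, ?_⟩
              rw [← arc_eq_univ (ψ s(p, q)) (le_refl (t - 1))]
              exact h3
            · exact Or.inr hjack
          · -- distinct branches: glue
            rcases ih ψ harc p q hq (k + i₀ - πq) hAq hcardq with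
              ⟨v₁, q1, hq1path, hq1supp, hq1cov⟩ | hjack
            swap
            · exact Or.inr hjack
            right
            refine ⟨v₁, v₂, q1.reverse.append q2, ?_, ?_⟩
            · rw [Walk.isPath_def, Walk.support_append, List.nodup_append]
              refine ⟨?_, ?_, ?_⟩
              · rw [Walk.support_reverse, List.nodup_reverse]
                exact hq1path.support_nodup
              · exact List.Nodup.sublist (List.tail_sublist _) hq2path.support_nodup
              · intro z hz1 z' hz2 hzz'
                rw [← hzz'] at hz2
                rw [Walk.support_reverse, List.mem_reverse] at hz1
                have hz2' : z ∈ q2.support := List.mem_of_mem_tail hz2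
                have hzp : z ≠ p := by
                  intro hzz
                  have hnod := hq2path.support_nodup
                  rw [Walk.support_eq_cons q2] at hnod
                  exact (List.nodup_cons.mp hnod).1 (hzz ▸ hz2)
                rcases hq1supp z hz1 with rfl | hz1'
                · exact hzp rfl
                · rcases hq2supp z hz2' with rfl | hz2''
                  · exact hzp rfl
                  · exact RchB_disjoint hac hq hq' hqq hz1' hz2''
            · rw [covw_append, covw_reverse]
              intro ξ _
              have h8 := cover3 (t := t) a (k := k) (i₀ := i₀) (π := πq) (π' := π')
                hπqk hπ'k (by omega)
              rcases h8 (Set.mem_univ ξ) with (h9 | h9) | h9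
              · exact Or.inl (spect_subset_covw ψ q1 q1.start_mem_support
                  (by rw [hspect0]; exact h9))
              · exact Or.inl (hq1cov (by rw [hφqform]; exact h9))
              · exact Or.inr (hq2cov h9)
      · -- no B-point: A at L
        have hA : ∃ q, H.Adj p q ∧ q ≠ x ∧
            Arc (ψ s(p, q)) (((a + ((L : ℕ) : ZMod t)) - ψ s(p, q)).val) ⊆ WSB H ψ p q := by
          rcases hAB L (by omega) (le_refl L) with h10 | h10
          · exact h10
          · exfalso
            apply hB
            obtain ⟨q, hq, hqx, h⟩ := h10
            refine ⟨L - (k + 1), by omega, q, hq, hqx, ?_⟩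
            have e1 : k + 1 + (L - (k + 1)) = L := by omega
            rw [e1]
            exact h
        obtain ⟨q, hq, hqx, hAq⟩ := hA
        have hφqmem : ψ s(p, q) ∈ spect H ψ p := edge_color_mem_spect' hq
        rw [hspect0, mem_arc] at hφqmem
        set πq := (ψ s(p, q) - a).val with hπqdef
        have hπqk : πq ≤ k := hφqmem
        have hbaseL : ((a + ((L : ℕ) : ZMod t)) - a).val = L := pos_base_add a (by omega)
        have hradL : ((a + ((L : ℕ) : ZMod t)) - ψ s(p, q)).val = L - πq := by
          have hps := pos_sub a (a + ((L : ℕ) : ZMod t)) (ψ s(p, q))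
          rw [hbaseL, ← hπqdef] at hps
          rw [hps, if_pos (by omega)]
        rw [hradL] at hAq
        have hφqform : ψ s(p, q) = a + ((πq : ℕ) : ZMod t) := by
          rw [hπqdef]; exact eq_base_add_pos a (ψ s(p, q))
        have hcardq : (RchB H p q).ncard ≤ n := by
          have h6 := Set.ncard_lt_ncard (RchB_ssubset hac hadj hq hqx) (Set.toFinite _)
          omega
        rcases ih ψ harc p q hq (L - πq) hAq hcardq with
          ⟨v₁, q1, hq1path, hq1supp, hq1cov⟩ | hjack
        swap
        · exact Or.inr hjack
        left
        refine ⟨v₁, Walk.cons hadj q1, ?_, ?_, ?_⟩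
        · rw [Walk.cons_isPath_iff]
          refine ⟨hq1path, fun hxs => ?_⟩
          rcases hq1supp x hxs with h7 | h7
          · exact hadj.ne h7
          · exact neighbor_not_mem_RchB hac hq hadj.symm (Ne.symm hqx) h7
        · intro z hz
          rw [Walk.support_cons] at hz
          rcases List.mem_cons.mp hz with rfl | hz
          · exact Or.inl rfl
          · rcases hq1supp z hz with hzp | hz'
            · exact Or.inr (by rw [hzp]; exact self_mem_RchB x p)
            · exact Or.inr (RchB_subset hac hadj hq hqx hz')
        · rw [covw_cons]
          intro ξ hξ
          right
          have h12 := sub2 (t := t) a (j := j) (π := πq) (D := D) hjk hπqk hk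
          rw [← hcform, ← hLdef] at h12
          rcases h12 hξ with h13 | h13
          · exact spect_subset_covw ψ q1 q1.start_mem_support (by rw [hspect0]; exact h13)
          · exact hq1cov (by rw [hφqform]; exact h13)

end ReachMain


section Top

variable {t : ℕ} [NeZero t] {V : Type*} [Fintype V] [DecidableEq V] {H : SimpleGraph V}

lemma cover2 (a : ZMod t) {k π : ℕ} (hπ : π ≤ k) (hk : k ≤ t - 1) :
    Set.univ ⊆ Arc a k ∪ Arc (a + ((π : ℕ) : ZMod t)) (t - 1 - π) := by
  intro ξ _
  have ht : 0 < t := tpos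
  set κ := (ξ - a).val with hκd
  have hκlt : κ < t := pos_lt a ξ
  have hπb : ((a + ((π : ℕ) : ZMod t)) - a).val = π := pos_base_add a (by omega)
  have h1 := pos_sub a ξ (a + ((π : ℕ) : ZMod t))
  rw [hπb, ← hκd] at h1
  rcases le_or_gt κ k with h3 | h3
  · exact Or.inl h3
  · refine Or.inr ?_
    rw [mem_arc, h1, if_pos (by omega)]
    omega

lemma exists_nbr_of_incidence {p : V} {e : Sym2 V} (he : e ∈ H.incidenceSet p) :
    ∃ q, H.Adj p q ∧ e = s(p, q) := by
  obtain ⟨hedge, hp⟩ := he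
  induction e with
  | _ u v =>
    rw [mem_edgeSet] at hedge
    rcases Sym2.mem_iff.mp hp with rfl | rfl
    · exact ⟨v, hedge, rfl⟩
    · exact ⟨u, hedge.symm, Sym2.eq_swap⟩

lemma RchB_decomp0 (hconn : H.Connected) {p v : V} (hvp : v ≠ p) :
    ∃ q, H.Adj p q ∧ v ∈ RchB H p q := by
  obtain ⟨w0⟩ := hconn.preconnected p v
  have hbp : w0.bypass.IsPath := Walk.bypass_isPath w0
  set w := w0.bypass with hwdef
  clear_value w
  cases w with
  | nil => exact absurd rfl hvp.symm
  | cons hadj wtl =>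
    rename_i q
    have hpath := (Walk.cons_isPath_iff _ _).mp hbp
    have hps : p ∉ wtl.support := hpath.2
    refine ⟨q, hadj, ⟨wtl, ?_⟩⟩
    intro hc
    exact hps (Walk.fst_mem_support_of_mem_edges wtl hc)

/-- main covering lemma: some path covers all colors. -/
lemma top_cover (hconn : H.Connected) (hac : H.IsAcyclic) (ψ : Sym2 V → ZMod t)
    (harc : ∀ z : V, (H.incidenceSet z).Nonempty → IsArc (spect H ψ z))
    (hall : ∀ χ : ZMod t, ∃ v : V, χ ∈ spect H ψ v) :
    Jack H ψ := by
  have ht : 0 < t := tpos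
  obtain ⟨p, hppos⟩ := hall 0
  have hpinc : (H.incidenceSet p).Nonempty := by
    obtain ⟨e, he, _⟩ := hppos
    exact ⟨e, he⟩
  obtain ⟨a, k0, hspect0⟩ := harc p hpinc
  rw [arc_trunc] at hspect0
  set k := min k0 (t - 1) with hkdef
  have hk : k ≤ t - 1 := min_le_right _ _
  by_cases hklt : k < t - 1
  case neg =>
    -- spectrum of p is everything
    have hsp : spect H ψ p = Set.univ := by
      rw [hspect0]
      exact arc_eq_univ a (by omega)
    obtain ⟨e, he⟩ := hpinc
    obtain ⟨q, hq, rfl⟩ := exists_nbr_of_incidence he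
    refine ⟨p, q, Walk.cons hq Walk.nil, ?_, ?_⟩
    · rw [Walk.cons_isPath_iff]
      exact ⟨Walk.IsPath.nil, by simp [hq.ne]⟩
    · rw [covw_cons]
      intro ξ _
      exact Or.inl (hsp ▸ Set.mem_univ ξ)
  case pos =>
  have hstretch : ∀ κ : ℕ, k + 1 ≤ κ → κ ≤ t - 1 →
      (∃ v, v ≠ p ∧ (a + (κ : ZMod t)) ∈ spect H ψ v) ∧
        (a + (κ : ZMod t)) ∉ spect H ψ p := by
    intro κ h1 h2
    have hκlt : κ < t := by omega
    have hbase : ((a + (κ : ZMod t)) - a).val = κ := pos_base_add a hκlt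
    have hnot : (a + (κ : ZMod t)) ∉ spect H ψ p := by
      rw [hspect0, mem_arc, hbase]
      omega
    obtain ⟨v, hv⟩ := hall (a + (κ : ZMod t))
    exact ⟨⟨v, fun h => hnot (h ▸ hv), hv⟩, hnot⟩
  have hAB : ∀ κ : ℕ, k + 1 ≤ κ → κ ≤ t - 1 →
      (∃ q, H.Adj p q ∧
        Arc (ψ s(p, q)) (((a + (κ : ZMod t)) - ψ s(p, q)).val) ⊆ WSB H ψ p q) ∨
      (∃ q, H.Adj p q ∧
        Arc (a + (κ : ZMod t)) ((ψ s(p, q) - (a + (κ : ZMod t))).val) ⊆ WSB H ψ p q) := by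
    intro κ h1 h2
    obtain ⟨⟨v, hvp, hξv⟩, hnot⟩ := hstretch κ h1 h2
    obtain ⟨q, hq, hvq⟩ := RchB_decomp0 hconn hvp
    rcases branch_contig ψ harc hq hvq hξv with h | h
    · exact Or.inl ⟨q, hq, h⟩
    · exact Or.inr ⟨q, hq, h⟩
  classical
  by_cases hB : ∃ i : ℕ, i ≤ (t - 1) - (k + 1) ∧ ∃ q, H.Adj p q ∧
      Arc (a + ((k + 1 + i : ℕ) : ZMod t))
        ((ψ s(p, q) - (a + ((k + 1 + i : ℕ) : ZMod t))).val) ⊆ WSB H ψ p q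
  · -- B-point exists
    have hspec := Nat.find_spec hB
    set i₀ := Nat.find hB with hi₀def
    obtain ⟨hi₀le, q', hq', hBq'⟩ := hspec
    have hκ₀lt : k + 1 + i₀ ≤ t - 1 := by omega
    have hφ'mem : ψ s(p, q') ∈ spect H ψ p := edge_color_mem_spect' hq'
    rw [hspect0, mem_arc] at hφ'mem
    set π' := (ψ s(p, q') - a).val with hπ'def
    have hπ'k : π' ≤ k := hφ'mem
    have hbase₀ : ((a + ((k + 1 + i₀ : ℕ) : ZMod t)) - a).val = k + 1 + i₀ :=
      pos_base_add a (by omega)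
    have hrad : (ψ s(p, q') - (a + ((k + 1 + i₀ : ℕ) : ZMod t))).val
        = π' + t - (k + 1 + i₀) := by
      have hps := pos_sub a (ψ s(p, q')) (a + ((k + 1 + i₀ : ℕ) : ZMod t))
      rw [hbase₀, ← hπ'def] at hps
      rw [hps, if_neg (by omega)]
    have hanchor : ψ s(p, q') = (a + ((k + 1 + i₀ : ℕ) : ZMod t))
        + ((π' + t - (k + 1 + i₀) : ℕ) : ZMod t) := by
      have h5 := eq_base_add_pos (a + ((k + 1 + i₀ : ℕ) : ZMod t)) (ψ s(p, q'))
      rw [hrad] at h5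
      exact h5
    rw [hrad] at hBq'
    rcases reachm_of ((RchB H p q').ncard) (reach_main hac _) ψ harc p q' hq' _ _
        hanchor hBq' (le_refl _) with ⟨v₂, q2, hq2path, hq2supp, hq2cov⟩ | hjack
    swap
    · exact hjack
    have hsp2 : spect H ψ p ⊆ covw ψ q2 :=
      spect_subset_covw ψ q2 q2.start_mem_support
    rcases Nat.eq_zero_or_pos i₀ with hi0 | hi0
    · -- i₀ = 0 : q2 itself covers everything
      refine ⟨p, v₂, q2, hq2path, ?_⟩
      intro ξ _
      have h8 := cover3 (t := t) a (k := k) (i₀ := 0) (π := π') (π' := π')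
        hπ'k hπ'k (by omega)
      rw [hi0] at hq2cov
      rcases h8 (Set.mem_univ ξ) with (h9 | h9) | h9
      · exact hsp2 (by rw [hspect0]; exact h9)
      · refine hsp2 ?_
        rw [hspect0]
        refine arc_sub_arc ?_ h9
        rw [pos_base_add a (by omega)]
        omega
      · exact hq2cov h9
    · -- i₀ > 0
      have hmin := Nat.find_min hB (show i₀ - 1 < i₀ by omega)
      have hA : ∃ q, H.Adj p q ∧
          Arc (ψ s(p, q)) (((a + ((k + i₀ : ℕ) : ZMod t)) - ψ s(p, q)).val)
            ⊆ WSB H ψ p q := by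
        rcases hAB (k + i₀) (by omega) (by omega) with h10 | h10
        · exact h10
        · exfalso
          apply hmin
          refine ⟨by omega, ?_⟩
          have e1 : k + 1 + (i₀ - 1) = k + i₀ := by omega
          rw [e1]
          exact h10
      obtain ⟨q, hq, hAq⟩ := hA
      have hφqmem : ψ s(p, q) ∈ spect H ψ p := edge_color_mem_spect' hq
      rw [hspect0, mem_arc] at hφqmem
      set πq := (ψ s(p, q) - a).val with hπqdef
      have hπqk : πq ≤ k := hφqmem
      have hbaseA : ((a + ((k + i₀ : ℕ) : ZMod t)) - a).val = k + i₀ :=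
        pos_base_add a (by omega)
      have hradA : ((a + ((k + i₀ : ℕ) : ZMod t)) - ψ s(p, q)).val = k + i₀ - πq := by
        have hps := pos_sub a (a + ((k + i₀ : ℕ) : ZMod t)) (ψ s(p, q))
        rw [hbaseA, ← hπqdef] at hps
        rw [hps, if_pos (by omega)]
      rw [hradA] at hAq
      have hφqform : ψ s(p, q) = a + ((πq : ℕ) : ZMod t) := by
        rw [hπqdef]; exact eq_base_add_pos a (ψ s(p, q))
      by_cases hqq : q = q'
      · -- same branch : entire circle in WSB p q
        have hpp : π' = πq := by rw [hπ'def, hπqdef, hqq]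
        rw [← hqq] at hBq'
        rw [hpp] at hBq'
        have huniv : Arc (ψ s(p, q)) (t - 1) ⊆ WSB H ψ p q := by
          rw [arc_eq_univ (ψ s(p, q)) (le_refl _)]
          intro ξ _
          rcases coverW (t := t) a (k := k) (i₀ := i₀) (π := πq) hπqk (by omega)
            (Set.mem_univ ξ) with h11 | h11
          · exact hAq (by rw [hφqform]; exact h11)
          · exact hBq' h11
        rcases reach_main hac ((RchB H p q).ncard) ψ harc p q hq (t - 1) huniv
          (le_refl _) with ⟨v₁, q1, h1, h2, h3⟩ | hjack
        · refine ⟨p, v₁, q1, h1, ?_⟩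
          rw [← arc_eq_univ (ψ s(p, q)) (le_refl (t - 1))]
          exact h3
        · exact hjack
      · -- distinct branches : glue
        rcases reach_main hac ((RchB H p q).ncard) ψ harc p q hq (k + i₀ - πq) hAq
          (le_refl _) with ⟨v₁, q1, hq1path, hq1supp, hq1cov⟩ | hjack
        swap
        · exact hjack
        refine ⟨v₁, v₂, q1.reverse.append q2, ?_, ?_⟩
        · rw [Walk.isPath_def, Walk.support_append, List.nodup_append]
          refine ⟨?_, ?_, ?_⟩
          · rw [Walk.support_reverse, List.nodup_reverse]
            exact hq1path.support_nodup
          · exact List.Nodup.sublist (List.tail_sublist _) hq2path.support_nodup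
          · intro z hz1 z' hz2 hzz'
            rw [← hzz'] at hz2
            rw [Walk.support_reverse, List.mem_reverse] at hz1
            have hz2' : z ∈ q2.support := List.mem_of_mem_tail hz2
            have hzp : z ≠ p := by
              intro hzz
              have hnod := hq2path.support_nodup
              rw [Walk.support_eq_cons q2] at hnod
              exact (List.nodup_cons.mp hnod).1 (hzz ▸ hz2)
            rcases hq1supp z hz1 with rfl | hz1'
            · exact hzp rfl
            · rcases hq2supp z hz2' with rfl | hz2''
              · exact hzp rfl
              · exact RchB_disjoint hac hq hq' hqq hz1' hz2''
        · rw [covw_append, covw_reverse]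
          intro ξ _
          have h8 := cover3 (t := t) a (k := k) (i₀ := i₀) (π := πq) (π' := π')
            hπqk hπ'k (by omega)
          rcases h8 (Set.mem_univ ξ) with (h9 | h9) | h9
          · exact Or.inl (spect_subset_covw ψ q1 q1.start_mem_support
              (by rw [hspect0]; exact h9))
          · exact Or.inl (hq1cov (by rw [hφqform]; exact h9))
          · exact Or.inr (hq2cov h9)
  · -- no B-point : A at t-1, single branch reaches everything
    have hA : ∃ q, H.Adj p q ∧
        Arc (ψ s(p, q)) (((a + ((t - 1 : ℕ) : ZMod t)) - ψ s(p, q)).val) ⊆ WSB H ψ p q := by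
      rcases hAB (t - 1) (by omega) (le_refl _) with h10 | h10
      · exact h10
      · exfalso
        apply hB
        obtain ⟨q, hq, h⟩ := h10
        refine ⟨(t - 1) - (k + 1), by omega, q, hq, ?_⟩
        have e1 : k + 1 + ((t - 1) - (k + 1)) = t - 1 := by omega
        rw [e1]
        exact h
    obtain ⟨q, hq, hAq⟩ := hA
    have hφqmem : ψ s(p, q) ∈ spect H ψ p := edge_color_mem_spect' hq
    rw [hspect0, mem_arc] at hφqmem
    set πq := (ψ s(p, q) - a).val with hπqdef
    have hπqk : πq ≤ k := hφqmem
    have hbaseL : ((a + ((t - 1 : ℕ) : ZMod t)) - a).val = t - 1 := pos_base_add a (by omega)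
    have hradL : ((a + ((t - 1 : ℕ) : ZMod t)) - ψ s(p, q)).val = (t - 1) - πq := by
      have hps := pos_sub a (a + ((t - 1 : ℕ) : ZMod t)) (ψ s(p, q))
      rw [hbaseL, ← hπqdef] at hps
      rw [hps, if_pos (by omega)]
    rw [hradL] at hAq
    have hφqform : ψ s(p, q) = a + ((πq : ℕ) : ZMod t) := by
      rw [hπqdef]; exact eq_base_add_pos a (ψ s(p, q))
    rcases reach_main hac ((RchB H p q).ncard) ψ harc p q hq ((t - 1) - πq) hAq
      (le_refl _) with ⟨v₁, q1, hq1path, hq1supp, hq1cov⟩ | hjack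
    swap
    · exact hjack
    refine ⟨p, v₁, q1, hq1path, ?_⟩
    intro ξ _
    rcases cover2 (t := t) a (k := k) (π := πq) hπqk hk (Set.mem_univ ξ) with h13 | h13
    · exact spect_subset_covw ψ q1 q1.start_mem_support (by rw [hspect0]; exact h13)
    · exact hq1cov (by rw [hφqform]; exact h13)

end Top


section GoodPath

variable {t : ℕ} [NeZero t] {V : Type*} [Fintype V] [DecidableEq V] {H : SimpleGraph V}

lemma path_start_ne_end {x1 v : V} (w₁ : H.Walk x1 v) (h : w₁.IsPath) (hlen : 1 ≤ w₁.length) :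
    x1 ≠ v := by
  rintro rfl
  rw [Walk.isPath_iff_eq_nil] at h
  rw [h] at hlen
  simp at hlen

lemma other_nbr_not_support (hac : H.IsAcyclic) {u u₁ b v : V} (h₁ : H.Adj u u₁)
    (hb : H.Adj u b) (hne : b ≠ u₁) (w₁ : H.Walk u₁ v) (hw : (Walk.cons h₁ w₁).IsPath) :
    b ∉ (Walk.cons h₁ w₁).support := by
  intro hbs
  have hbu : b ≠ u := hb.ne'
  have hP2 : ((Walk.cons h₁ w₁).takeUntil b hbs).IsPath := hw.takeUntil hbs
  have hP1 : (Walk.cons hb Walk.nil).IsPath := by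
    rw [Walk.cons_isPath_iff]
    exact ⟨Walk.IsPath.nil, by simp [hbu.symm]⟩
  have huniq := (isAcyclic_iff_path_unique.mp hac)
    (p := ⟨Walk.cons hb Walk.nil, hP1⟩) (q := ⟨(Walk.cons h₁ w₁).takeUntil b hbs, hP2⟩)
  have heq : Walk.cons hb Walk.nil = (Walk.cons h₁ w₁).takeUntil b hbs :=
    congrArg Subtype.val huniq
  have hmem : s(u, b) ∈ (Walk.cons h₁ w₁).edges := by
    apply Walk.edges_takeUntil_subset (Walk.cons h₁ w₁) hbs
    rw [← heq]
    simp
  rw [Walk.edges_cons] at hmem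
  rcases List.mem_cons.mp hmem with hc | hc
  · rcases Sym2.eq_iff.mp hc with ⟨h3, h4⟩ | ⟨h3, h4⟩
    · exact hne h4
    · exact hbu h4
  · exact ((Walk.cons_isPath_iff _ _).mp hw).2 (Walk.fst_mem_support_of_mem_edges w₁ hc)

/-- extend the start of the path, or the start spectrum is a single color. -/
lemma step_end (hac : H.IsAcyclic) (ψ : Sym2 V → ZMod t) {u u₁ v : V} (h₁ : H.Adj u u₁)
    (w₁ : H.Walk u₁ v) (hw : (Walk.cons h₁ w₁).IsPath) :
    (∃ b, ∃ hb : H.Adj b u, b ∉ (Walk.cons h₁ w₁).support) ∨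
      spect H ψ u ⊆ {ψ s(u, u₁)} := by
  by_cases hbu : ∃ b, H.Adj u b ∧ b ≠ u₁
  · obtain ⟨b, hb, hne⟩ := hbu
    exact Or.inl ⟨b, hb.symm, other_nbr_not_support hac h₁ hb hne w₁ hw⟩
  · right
    push_neg at hbu
    rintro χ ⟨e, he, rfl⟩
    obtain ⟨q, hq, rfl⟩ := exists_nbr_of_incidence he
    rw [hbu q hq]
    rfl

/-- from a path covering all colors (with endpoints), get a path of length ≥ 2 whose
internal vertices cover all colors. -/
lemma goodpath (hac : H.IsAcyclic) (ψ : Sym2 V → ZMod t) (ht2 : 2 ≤ t) (hJ : Jack H ψ) :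
    ∃ (x' x'' : V) (p : H.Walk x' x''), p.IsPath ∧ 2 ≤ p.length ∧
      Set.univ ⊆ ⋃ z ∈ {y | y ∈ p.support ∧ y ≠ x' ∧ y ≠ x''}, spect H ψ z := by
  have ht : 0 < t := tpos
  have h01 : (0 : ZMod t) ≠ 1 := by
    haveI : Fact (1 < t) := ⟨by omega⟩
    intro h
    have h2 := congrArg ZMod.val h
    rw [ZMod.val_zero, ZMod.val_one] at h2
    omega
  -- helper: a vertex whose spectrum is everything gives a 2-path
  have hvertex : ∀ u : V, Set.univ ⊆ spect H ψ u →
      ∃ (x' x'' : V) (p : H.Walk x' x''), p.IsPath ∧ 2 ≤ p.length ∧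
        Set.univ ⊆ ⋃ z ∈ {y | y ∈ p.support ∧ y ≠ x' ∧ y ≠ x''}, spect H ψ z := by
    intro u hu
    obtain ⟨e₀, he₀, hψ₀⟩ := hu (Set.mem_univ (0 : ZMod t))
    obtain ⟨e₁, he₁, hψ₁⟩ := hu (Set.mem_univ (1 : ZMod t))
    obtain ⟨b₀, hb₀, rfl⟩ := exists_nbr_of_incidence he₀
    obtain ⟨b₁, hb₁, rfl⟩ := exists_nbr_of_incidence he₁
    have hbb : b₀ ≠ b₁ := by
      rintro rfl
      exact h01 (hψ₀.symm.trans hψ₁)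
    refine ⟨b₀, b₁, Walk.cons hb₀.symm (Walk.cons hb₁ Walk.nil), ?_, by simp, ?_⟩
    · rw [Walk.cons_isPath_iff, Walk.cons_isPath_iff]
      refine ⟨⟨Walk.IsPath.nil, by simp [hb₁.ne]⟩, ?_⟩
      simp only [Walk.support_cons, Walk.support_nil, List.mem_cons, List.mem_singleton,
        List.not_mem_nil]
      push_neg
      exact ⟨hb₀.ne', hbb, trivial⟩
    · intro χ _
      refine Set.mem_biUnion ?_ (hu (Set.mem_univ χ))
      simp only [Set.mem_setOf_eq, Walk.support_cons, Walk.support_nil]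
      exact ⟨by simp, hb₀.ne, hb₁.ne⟩
  obtain ⟨u, v, w, hw, hcov⟩ := hJ
  -- phase 1 : absorb / extend the start endpoint
  have phase1 : ∀ (u v : V) (w : H.Walk u v), w.IsPath → 1 ≤ w.length →
      Set.univ ⊆ covw ψ w →
      ∃ (U : V) (W : H.Walk U v), W.IsPath ∧ 1 ≤ W.length ∧
        Set.univ ⊆ ⋃ z ∈ {y | y ∈ W.support ∧ y ≠ U}, spect H ψ z := by
    clear hcov hw w u v
    intro u v w hw hlen hcov
    cases w with
    | nil => simp at hlen
    | @cons u u₁ v h₁ w₁ =>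
      rcases step_end hac ψ h₁ w₁ hw with ⟨b, hb, hbs⟩ | habs
      · refine ⟨b, Walk.cons hb (Walk.cons h₁ w₁), ?_, by simp, ?_⟩
        · rw [Walk.cons_isPath_iff]
          exact ⟨hw, hbs⟩
        · intro χ hχ
          obtain ⟨z, hz, hsz⟩ := mem_covw.mp (hcov hχ)
          refine Set.mem_biUnion ?_ hsz
          refine ⟨?_, ?_⟩
          · rw [Walk.support_cons]
            exact List.mem_cons.mpr (Or.inr hz)
          · rintro rfl
            exact hbs hz
      · refine ⟨u, Walk.cons h₁ w₁, hw, by simp, ?_⟩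
        intro χ hχ
        obtain ⟨z, hz, hsz⟩ := mem_covw.mp (hcov hχ)
        by_cases hzu : z = u
        · subst hzu
          have h3 : χ = ψ s(z, u₁) := habs hsz
          refine Set.mem_biUnion (show u₁ ∈ _ ∧ u₁ ≠ z from ?_) ?_
          · constructor
            · rw [Walk.support_cons]
              exact List.mem_cons.mpr (Or.inr w₁.start_mem_support)
            · exact h₁.ne'
          · rw [h3]
            exact edge_color_mem_spect h₁
        · exact Set.mem_biUnion ⟨hz, hzu⟩ hsz
  -- phase 2 : absorb / extend the other endpoint, keeping the first one excluded
  have phase2 : ∀ (U v : V) (W : H.Walk U v), W.IsPath → 1 ≤ W.length →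
      Set.univ ⊆ (⋃ z ∈ {y | y ∈ W.support ∧ y ≠ U}, spect H ψ z) →
      ∃ (x' x'' : V) (p : H.Walk x' x''), p.IsPath ∧ 2 ≤ p.length ∧
        Set.univ ⊆ ⋃ z ∈ {y | y ∈ p.support ∧ y ≠ x' ∧ y ≠ x''}, spect H ψ z := by
    clear hcov hw w u v
    intro U v W hW hlen hcov
    have hWrev : W.reverse.IsPath := hW.reverse
    cases hrev : W.reverse with
    | nil =>
      exfalso
      have h5 := Walk.length_reverse W
      rw [hrev] at h5
      simp at h5
      omega
    | cons h₂ wr =>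
      rename_i v₁
      have hWrev' : (Walk.cons h₂ wr).IsPath := hrev ▸ hWrev
      have hsupprev : ∀ z, z ∈ W.support ↔ z ∈ (Walk.cons h₂ wr).support := by
        intro z
        rw [← hrev, Walk.support_reverse, List.mem_reverse]
      rcases step_end hac ψ h₂ wr hWrev' with ⟨b₂, hb₂, hbs₂⟩ | habs₂
      · -- extend at the v end
        refine ⟨b₂, U, Walk.cons hb₂ (Walk.cons h₂ wr), ?_, ?_, ?_⟩
        · rw [Walk.cons_isPath_iff]
          exact ⟨hWrev', hbs₂⟩
        · have h5 := Walk.length_reverse W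
          rw [hrev] at h5
          simp only [Walk.length_cons] at h5 ⊢
          omega
        · intro χ hχ
          obtain ⟨z, ⟨hz, hzU⟩, hsz⟩ := Set.mem_iUnion₂.mp (hcov hχ)
          refine Set.mem_biUnion ?_ hsz
          refine ⟨?_, ?_, hzU⟩
          · rw [Walk.support_cons]
            exact List.mem_cons.mpr (Or.inr ((hsupprev z).mp hz))
          · rintro rfl
            exact hbs₂ ((hsupprev z).mp hz)
      · -- absorb the v end
        by_cases hlen1 : W.length = 1
        · -- contradiction : univ inside a single color
          exfalso
          have h5 := Walk.length_reverse W
          rw [hrev] at h5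
          simp only [Walk.length_cons, hlen1] at h5
          have hwr0 : wr.length = 0 := by omega
          have hv₁U : v₁ = U := by
            cases wr with
            | nil => rfl
            | cons h w => simp at hwr0
          obtain ⟨z, ⟨hz, hzU⟩, hsz0⟩ := Set.mem_iUnion₂.mp (hcov (Set.mem_univ (0 : ZMod t)))
          obtain ⟨z', ⟨hz', hzU'⟩, hsz1⟩ := Set.mem_iUnion₂.mp (hcov (Set.mem_univ (1 : ZMod t)))
          have hzv : ∀ y, y ∈ W.support → y ≠ U → y = v := by
            intro y hy hyU
            have h6 := (hsupprev y).mp hy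
            rw [Walk.support_cons] at h6
            rcases List.mem_cons.mp h6 with h7 | h7
            · exact h7
            · exfalso
              apply hyU
              cases wr with
              | nil =>
                simp only [Walk.support_nil, List.mem_singleton] at h7
                rw [h7, ← hv₁U]
              | cons h w => simp at hwr0
          have hzv1 := hzv z hz hzU
          have hzv2 := hzv z' hz' hzU'
          rw [hzv1] at hsz0
          rw [hzv2] at hsz1
          have h8 : (0 : ZMod t) = ψ s(v, v₁) := habs₂ hsz0
          have h9 : (1 : ZMod t) = ψ s(v, v₁) := habs₂ hsz1
          exact h01 (h8.trans h9.symm)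
        · -- length ≥ 2 : v₁ is internal
          have hlen2 : 2 ≤ W.length := by omega
          have hv₁U : v₁ ≠ U := by
            intro h7
            have hwr : wr.IsPath := ((Walk.cons_isPath_iff _ _).mp hWrev').1
            subst h7
            rw [Walk.isPath_iff_eq_nil] at hwr
            have h5 := Walk.length_reverse W
            rw [hrev, hwr] at h5
            simp at h5
            omega
          refine ⟨U, v, W, hW, hlen2, ?_⟩
          intro χ hχ
          obtain ⟨z, ⟨hz, hzU⟩, hsz⟩ := Set.mem_iUnion₂.mp (hcov hχ)
          by_cases hzv : z = v
          · subst hzv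
            have h3 : χ = ψ s(z, v₁) := habs₂ hsz
            refine Set.mem_biUnion (show v₁ ∈ W.support ∧ v₁ ≠ U ∧ v₁ ≠ z from ?_) ?_
            · refine ⟨?_, hv₁U, h₂.ne'⟩
              rw [hsupprev v₁, Walk.support_cons]
              exact List.mem_cons.mpr (Or.inr wr.start_mem_support)
            · rw [h3]
              exact edge_color_mem_spect h₂
          · exact Set.mem_biUnion ⟨hz, hzU, hzv⟩ hsz
  -- assemble
  cases w with
  | nil =>
    rw [covw_nil] at hcov
    exact hvertex u hcov
  | @cons u u₁ v h₁ w₁ =>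
    obtain ⟨U, W, h1, h2, h3⟩ := phase1 u v (Walk.cons h₁ w₁) hw (by simp) hcov
    exact phase2 U v W h1 h2 h3


end GoodPath


section Final

variable {t : ℕ} [NeZero t] {V : Type*} [Fintype V] [DecidableEq V] {H : SimpleGraph V}

lemma sym2_decomp (e : Sym2 V) : ∃ u v, e = s(u, v) := by
  induction e with
  | _ u v => exact ⟨u, v, rfl⟩

lemma image_Icc {m M : ℕ} (hm : 1 ≤ m) (hmM : m ≤ M) (hM : M ≤ t) :
    (fun n : ℕ => (n : ZMod t)) '' Set.Icc m M = Arc ((m : ℕ) : ZMod t) (M - m) := by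
  have ht : 0 < t := tpos
  ext χ
  constructor
  · rintro ⟨n, ⟨h1, h2⟩, rfl⟩
    rw [mem_arc, valsub n m (by omega)]
    have h3 : n + (t - m) = (n - m) + t := by omega
    rw [h3, Nat.add_mod_right, Nat.mod_eq_of_lt (by omega)]
    omega
  · intro hχ
    rw [mem_arc] at hχ
    have hv : χ = ((m : ℕ) : ZMod t) + ((χ - ((m : ℕ) : ZMod t)).val : ℕ) :=
      eq_base_add_pos _ χ
    refine ⟨m + (χ - ((m : ℕ) : ZMod t)).val, ⟨by omega, by omega⟩, ?_⟩
    show ((m + (χ - ((m : ℕ) : ZMod t)).val : ℕ) : ZMod t) = χ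
    rw [Nat.cast_add]
    exact hv.symm

lemma image_Icc2 {m M : ℕ} (hm : 1 ≤ m) (hmM : m ≤ M) (hM : M ≤ t) :
    (fun n : ℕ => (n : ZMod t)) '' (Set.Icc 1 m ∪ Set.Icc M t)
      = Arc ((M : ℕ) : ZMod t) (t - M + m) := by
  have ht : 0 < t := tpos
  ext χ
  constructor
  · rintro ⟨n, hn, rfl⟩
    rw [mem_arc, valsub n M (by omega)]
    rcases hn with ⟨h1, h2⟩ | ⟨h1, h2⟩
    · -- n ∈ [1, m]
      rcases Nat.lt_or_ge n M with h3 | h3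
      · rw [Nat.mod_eq_of_lt (by omega)]
        omega
      · -- n = M = m
        have h4 : n = M := by omega
        have h5 : n + (t - M) = t := by omega
        rw [h5, Nat.mod_self]
        omega
    · -- n ∈ [M, t]
      have h3 : n + (t - M) = (n - M) + t := by omega
      rw [h3, Nat.add_mod_right, Nat.mod_eq_of_lt (by omega)]
      omega
  · intro hχ
    rw [mem_arc] at hχ
    set vv := (χ - ((M : ℕ) : ZMod t)).val with hvv
    have hvlt : vv < t := pos_lt _ χ
    have hv : χ = ((M : ℕ) : ZMod t) + (vv : ℕ) := eq_base_add_pos _ χ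
    rcases le_or_gt (M + vv) t with h3 | h3
    · refine ⟨M + vv, Or.inr ⟨by omega, h3⟩, ?_⟩
      show ((M + vv : ℕ) : ZMod t) = χ
      rw [Nat.cast_add]
      exact hv.symm
    · refine ⟨M + vv - t, Or.inl ⟨by omega, by omega⟩, ?_⟩
      show ((M + vv - t : ℕ) : ZMod t) = χ
      have h5 : (M + vv : ℕ) = (M + vv - t) + t := by omega
      have h4 : ((M + vv : ℕ) : ZMod t) = ((M + vv - t : ℕ) : ZMod t) := by
        conv_lhs => rw [h5]
        rw [Nat.cast_add, ZMod.natCast_self, add_zero]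
      rw [← h4, Nat.cast_add]
      exact hv.symm

lemma cyclic_diff_eq {i₁ i₂ : ℕ} (h1 : i₁ ∈ Set.Icc 1 t) (h2 : i₂ ∈ Set.Icc 1 t) :
    Set.Icc 1 t \ (Set.Icc (min i₁ i₂) (max i₁ i₂) \ {i₁, i₂})
      = Set.Icc 1 (min i₁ i₂) ∪ Set.Icc (max i₁ i₂) t := by
  rw [Set.mem_Icc] at h1 h2
  ext n
  simp only [Set.mem_diff, Set.mem_Icc, Set.mem_union, Set.mem_insert_iff,
    Set.mem_singleton_iff]
  omega

lemma harc_of {φ : Sym2 V → ℕ} (hφ : IsCyclicIntervalColoring H t φ) :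
    ∀ z : V, (H.incidenceSet z).Nonempty →
      IsArc (spect H (fun e => ((φ e : ℕ) : ZMod t)) z) := by
  intro z hz
  have hspec : spect H (fun e => ((φ e : ℕ) : ZMod t)) z
      = (fun n : ℕ => (n : ZMod t)) '' (φ '' H.incidenceSet z) := by
    unfold spect
    rw [← Set.image_comp]
    rfl
  obtain ⟨i₁, h1, i₂, h2, hQ | hQ⟩ := hφ.2 z hz
  · rw [hspec, hQ, image_Icc (by rw [Set.mem_Icc] at h1 h2; omega)
      min_le_max (by rw [Set.mem_Icc] at h1 h2; simp; omega)]
    exact ⟨_, _, rfl⟩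
  · rw [hspec, hQ, cyclic_diff_eq h1 h2, image_Icc2 (by rw [Set.mem_Icc] at h1 h2; omega)
      min_le_max (by rw [Set.mem_Icc] at h1 h2; simp; omega)]
    exact ⟨_, _, rfl⟩

lemma hall_of {φ : Sym2 V → ℕ} (hφ : IsCyclicIntervalColoring H t φ) :
    ∀ χ : ZMod t, ∃ v : V, χ ∈ spect H (fun e => ((φ e : ℕ) : ZMod t)) v := by
  intro χ
  have ht : 0 < t := tpos
  have hvlt : χ.val < t := ZMod.val_lt χ
  set c := if χ.val = 0 then t else χ.val with hc
  have hcI : c ∈ Set.Icc 1 t := by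
    rw [Set.mem_Icc, hc]
    split_ifs <;> omega
  obtain ⟨e, he, hec⟩ := hφ.1.2.2 c hcI
  have hψ : ((φ e : ℕ) : ZMod t) = χ := by
    rw [hec, hc]
    split_ifs with h
    · rw [ZMod.natCast_self]
      exact ((ZMod.val_eq_zero χ).mp h).symm
    · rw [ZMod.natCast_val, ZMod.cast_id]
  obtain ⟨u, v, rfl⟩ := sym2_decomp e
  exact ⟨u, ⟨s(u, v), ⟨he, Sym2.mem_mk_left u v⟩, hψ⟩⟩

end Final

end Stmt4

/-- Corollary 1: if a tree admits a cyclically-interval `t`-coloring, then some `TP(x',x'')`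
has at least `t` edges. -/
theorem stmt4 {V : Type*} [Fintype V] (H : SimpleGraph V) (hH : H.IsTree)
    (t : ℕ) (φ : Sym2 V → ℕ) (hφ : IsCyclicIntervalColoring H t φ) :
    ∃ (x' x'' : V) (p : H.Walk x' x''), p.IsPath ∧ t ≤ (pathTP H p).ncard := by
  letI := Classical.decEq V
  have hV : Nonempty V := hH.isConnected.nonempty
  rcases Nat.eq_zero_or_pos t with rfl | htpos
  · obtain ⟨v⟩ := hV
    exact ⟨v, v, SimpleGraph.Walk.nil, SimpleGraph.Walk.IsPath.nil, Nat.zero_le _⟩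
  rcases eq_or_lt_of_le (Nat.succ_le_of_lt htpos) with ht1 | ht2
  · -- t = 1
    obtain ⟨e, he, hec⟩ := hφ.1.2.2 1 (by rw [Set.mem_Icc]; omega)
    obtain ⟨u, v, rfl⟩ := Stmt4.sym2_decomp e
    have hadj : H.Adj u v := (H.mem_edgeSet).mp he
    refine ⟨u, v, SimpleGraph.Walk.cons hadj SimpleGraph.Walk.nil, ?_, ?_⟩
    · rw [SimpleGraph.Walk.cons_isPath_iff]
      exact ⟨SimpleGraph.Walk.IsPath.nil, by simp [hadj.ne]⟩
    · have hTP : pathTP H (SimpleGraph.Walk.cons hadj SimpleGraph.Walk.nil) = {s(u, v)} := by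
        rw [pathTP, if_pos (by simp)]
        ext f
        simp [SimpleGraph.Walk.edges_cons]
      rw [hTP, Set.ncard_singleton]
      omega
  · -- 2 ≤ t
    haveI : NeZero t := ⟨by omega⟩
    set ψ : Sym2 V → ZMod t := fun e => ((φ e : ℕ) : ZMod t) with hψdef
    have harc := Stmt4.harc_of hφ
    have hall := Stmt4.hall_of hφ
    have hJ : Stmt4.Jack H ψ :=
      Stmt4.top_cover hH.isConnected hH.IsAcyclic ψ harc hall
    obtain ⟨x', x'', p, hp, hlen, hcover⟩ := Stmt4.goodpath hH.IsAcyclic ψ (by omega) hJ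
    refine ⟨x', x'', p, hp, ?_⟩
    have hTP : pathTP H p = ⋃ z ∈ {w | w ∈ p.support ∧ w ≠ x' ∧ w ≠ x''}, H.incidenceSet z := by
      rw [pathTP, if_neg (by omega)]
    have himg : Set.univ ⊆ ψ '' (pathTP H p) := by
      intro χ hχ
      obtain ⟨z, hz, hsz⟩ := Set.mem_iUnion₂.mp (hcover hχ)
      obtain ⟨e, he, rfl⟩ := hsz
      exact ⟨e, by rw [hTP]; exact Set.mem_biUnion hz he, rfl⟩
    have h1 : (Set.univ : Set (ZMod t)).ncard = t := by
      rw [Set.ncard_univ, Nat.card_eq_fintype_card, ZMod.card]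
    have h2 : (Set.univ : Set (ZMod t)).ncard ≤ (ψ '' pathTP H p).ncard :=
      Set.ncard_le_ncard himg (Set.toFinite _)
    have h3 : (ψ '' pathTP H p).ncard ≤ (pathTP H p).ncard :=
      Set.ncard_image_le (Set.toFinite _)
    omega
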